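/- Let p > 1. Then limsup over nonzero nonnegative f ∈ L^p(0,∞) of (∫_0^∞ |M(t) − A(t)|^p dt)/(∫_0^∞ f(t)^p dt) equals 2^{1−p}(p/(p−1))^p, i.e. the constant 2^{1−p}(p/(p−1))^p in the median Hardy inequality is best possible: for every ε > 0 there exists a nonnegative f ∈ L^p(0,∞) with ∫_0^∞ |M(t) − A(t)|^p dt > (2^{1−p}(p/(p−1))^p − ε) ∫_0^∞ f(t)^p dt. -/

import Mathlib

open MeasureTheory Set Filter

noncomputable def lowerMedian (f : ℝ → ℝ) (t : ℝ) : ℝ :=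
  sInf {a : ℝ | ENNReal.ofReal (t / 2) ≤ volume {s ∈ Ioo 0 t | f s ≤ a}}

noncomputable def decRearr (f : ℝ → ℝ) (s : ℝ) : ℝ :=
  sInf {a : ℝ | 0 ≤ a ∧ volume {x ∈ Ioi 0 | a < f x} ≤ ENNReal.ofReal s}

noncomputable section

/-- upper-half piece of the annulus `(q^(k+1), q^k]`. -/
def mhEk (q : ℝ) (k : ℕ) : Set ℝ := Ioc (q^k * ((1+q)/2)) (q^k)

/-- lower-half piece of the annulus. -/
def mhFk (q : ℝ) (k : ℕ) : Set ℝ := Ioc (q^(k+1)) (q^k * ((1+q)/2))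

def mhE (q : ℝ) : Set ℝ := ⋃ k, mhEk q k

def mhf (q β : ℝ) : ℝ → ℝ := (mhE q).indicator (fun s => s ^ (-β))

variable {q β : ℝ}

lemma mh_mid_lt (hq0 : 0 < q) (hq1 : q < 1) (k : ℕ) :
    q^(k+1) < q^k * ((1+q)/2) := by
  have : q^(k+1) = q^k * q := by ring
  rw [this]
  have hk : (0:ℝ) < q^k := pow_pos hq0 k
  nlinarith

lemma mh_mid_lt' (hq0 : 0 < q) (hq1 : q < 1) (k : ℕ) :
    q^k * ((1+q)/2) < q^k := by
  have hk : (0:ℝ) < q^k := pow_pos hq0 k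
  nlinarith

lemma mhEk_subset (hq0 : 0 < q) (hq1 : q < 1) (k : ℕ) :
    mhEk q k ⊆ Ioc (q^(k+1)) (q^k) := fun s hs =>
  ⟨(mh_mid_lt hq0 hq1 k).trans hs.1, hs.2⟩

lemma mhFk_subset (hq0 : 0 < q) (hq1 : q < 1) (k : ℕ) :
    mhFk q k ⊆ Ioc (q^(k+1)) (q^k) := fun s hs =>
  ⟨hs.1, hs.2.trans (mh_mid_lt' hq0 hq1 k).le⟩

lemma mh_annuli_disj (hq0 : 0 < q) (hq1 : q < 1) :
    Pairwise (Function.onFun Disjoint fun k : ℕ => Ioc (q^(k+1)) (q^k)) := by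
  have key : ∀ i j : ℕ, i < j → Disjoint (Ioc (q^(i+1)) (q^i)) (Ioc (q^(j+1)) (q^j)) := by
    intro i j hij
    rw [Set.disjoint_left]
    rintro s ⟨hs1, _⟩ ⟨_, hs4⟩
    have : q^j ≤ q^(i+1) := pow_le_pow_of_le_one hq0.le hq1.le hij
    linarith
  intro i j hij
  rcases hij.lt_or_gt with h | h
  · exact key i j h
  · exact (key j i h).symm

lemma mhEk_disj (hq0 : 0 < q) (hq1 : q < 1) :
    Pairwise (Function.onFun Disjoint fun k : ℕ => mhEk q k) := fun i j hij =>
  Disjoint.mono (mhEk_subset hq0 hq1 i) (mhEk_subset hq0 hq1 j) (mh_annuli_disj hq0 hq1 hij)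

lemma mhFk_disj (hq0 : 0 < q) (hq1 : q < 1) :
    Pairwise (Function.onFun Disjoint fun k : ℕ => mhFk q k) := fun i j hij =>
  Disjoint.mono (mhFk_subset hq0 hq1 i) (mhFk_subset hq0 hq1 j) (mh_annuli_disj hq0 hq1 hij)

lemma mhFk_disj_mhE (hq0 : 0 < q) (hq1 : q < 1) (k : ℕ) :
    Disjoint (mhFk q k) (mhE q) := by
  rw [Set.disjoint_right]
  rintro s hsE hsF
  rw [mhE, Set.mem_iUnion] at hsE
  obtain ⟨i, hsi⟩ := hsE
  rcases eq_or_ne i k with rfl | hik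
  · exact absurd hsi.1 (not_lt.2 hsF.2)
  · exact Set.disjoint_left.1
      (Disjoint.mono (mhEk_subset hq0 hq1 i) (mhFk_subset hq0 hq1 k)
        (mh_annuli_disj hq0 hq1 hik)) hsi hsF

lemma mhEk_meas (k : ℕ) : MeasurableSet (mhEk q k) := measurableSet_Ioc

lemma mhFk_meas {k : ℕ} : MeasurableSet (mhFk q k) := measurableSet_Ioc

lemma mhE_meas : MeasurableSet (mhE q) := MeasurableSet.iUnion fun k => mhEk_meas k

lemma mhf_meas : Measurable (mhf q β) :=
  Measurable.indicator (by measurability) mhE_meas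

lemma mhE_pos (hq0 : 0 < q) : ∀ s ∈ mhE q, 0 < s := by
  rintro s hs
  rw [mhE, Set.mem_iUnion] at hs
  obtain ⟨k, hk⟩ := hs
  have : (0:ℝ) < q^k * ((1+q)/2) := by positivity
  exact this.trans hk.1

lemma mhf_nonneg (hq0 : 0 < q) : ∀ x, 0 ≤ mhf q β x := by
  intro x
  rw [mhf]
  by_cases hx : x ∈ mhE q
  · rw [Set.indicator_of_mem hx]
    exact Real.rpow_nonneg (mhE_pos hq0 x hx).le _
  · rw [Set.indicator_of_notMem hx]

lemma mhE_subset_Ioi (hq0 : 0 < q) : mhE q ⊆ Ioi 0 := fun s hs => mhE_pos hq0 s hs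

lemma mhEk_vol (hq0 : 0 < q) (k : ℕ) :
    volume (mhEk q k) = ENNReal.ofReal (q^k * ((1-q)/2)) := by
  rw [mhEk, Real.volume_Ioc]
  congr 1
  ring

lemma mhFk_vol (hq0 : 0 < q) (k : ℕ) :
    volume (mhFk q k) = ENNReal.ofReal (q^k * ((1-q)/2)) := by
  rw [mhFk, Real.volume_Ioc]
  congr 1
  rw [pow_succ]
  ring

lemma mh_exists_k (hq0 : 0 < q) (hq1 : q < 1) {t : ℝ} (ht0 : 0 < t) (ht1 : t ≤ 1) :
    ∃ k : ℕ, q^(k+1) < t ∧ t ≤ q^k := by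
  have hev : ∃ n : ℕ, q^n < t :=
    ((tendsto_pow_atTop_nhds_zero_of_lt_one hq0.le hq1).eventually
      (gt_mem_nhds ht0)).exists
  classical
  have hqn : q^(Nat.find hev) < t := Nat.find_spec hev
  have hn0 : Nat.find hev ≠ 0 := by
    intro h
    rw [h, pow_zero] at hqn
    linarith
  obtain ⟨m, hm⟩ := Nat.exists_eq_succ_of_ne_zero hn0
  rw [hm] at hqn
  refine ⟨m, hqn, not_lt.1 ?_⟩
  have := Nat.find_min hev (m := m) (by omega)
  exact this

lemma mh_median_zero (hq0 : 0 < q) (hq1 : q < 1) {t : ℝ} (ht0 : 0 < t) (ht1 : t ≤ 1) :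
    lowerMedian (mhf q β) t = 0 := by
  obtain ⟨k, hk1, hk2⟩ := mh_exists_k hq0 hq1 ht0 ht1
  set a := q^k * ((1+q)/2) with ha
  have hq1k : (0:ℝ) < q^(k+1) := pow_pos hq0 _
  have haq : q^(k+1) < a := mh_mid_lt hq0 hq1 k
  have h0S : ENNReal.ofReal (t / 2) ≤ volume {s ∈ Ioo 0 t | mhf q β s ≤ 0} := by
    set H : Set ℝ := (⋃ j : ℕ, mhFk q (k+1+j)) ∪ Ioo (q^(k+1)) (min t a) with hH
    have hHsub : H ⊆ {s ∈ Ioo 0 t | mhf q β s ≤ 0} := by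
      rintro s (hs | hs)
      · rw [Set.mem_iUnion] at hs
        obtain ⟨j, hj⟩ := hs
        have h1 : q^(k+1+j+1) < s := (mhFk_subset hq0 hq1 _ hj).1
        have h2 : s ≤ q^(k+1+j) := (mhFk_subset hq0 hq1 _ hj).2
        have h3 : q^(k+1+j) ≤ q^(k+1) := pow_le_pow_of_le_one hq0.le hq1.le (by omega)
        refine ⟨⟨(pow_pos hq0 _).trans h1, by linarith⟩, ?_⟩
        have : s ∉ mhE q := fun hsE =>
          Set.disjoint_left.1 (mhFk_disj_mhE hq0 hq1 (k+1+j)) hj hsE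
        rw [mhf, Set.indicator_of_notMem this]
      · obtain ⟨hs1, hs2⟩ := hs
        have hst : s < t := hs2.trans_le (min_le_left _ _)
        have hsa : s < a := hs2.trans_le (min_le_right _ _)
        refine ⟨⟨hq1k.trans hs1, hst⟩, ?_⟩
        have hsnE : s ∉ mhE q := by
          intro hsE
          rw [mhE, Set.mem_iUnion] at hsE
          obtain ⟨i, hi⟩ := hsE
          rcases eq_or_ne i k with rfl | hik
          · exact absurd hi.1 (not_lt.2 hsa.le)
          · have hsk : s ∈ Ioc (q^(k+1)) (q^k) :=
              ⟨hs1, (hsa.trans (mh_mid_lt' hq0 hq1 k)).le⟩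
            exact Set.disjoint_left.1
              (Disjoint.mono (mhEk_subset hq0 hq1 i) le_rfl
                (mh_annuli_disj hq0 hq1 hik)) hi hsk
        rw [mhf, Set.indicator_of_notMem hsnE]
    have hdisj : Disjoint (⋃ j : ℕ, mhFk q (k+1+j)) (Ioo (q^(k+1)) (min t a)) := by
      rw [Set.disjoint_left]
      rintro s hs ⟨hs1, _⟩
      rw [Set.mem_iUnion] at hs
      obtain ⟨j, hj⟩ := hs
      have h2 : s ≤ q^(k+1+j) := (mhFk_subset hq0 hq1 _ hj).2
      have h3 : q^(k+1+j) ≤ q^(k+1) := pow_le_pow_of_le_one hq0.le hq1.le (by omega)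
      linarith
    have hvolU : volume (⋃ j : ℕ, mhFk q (k+1+j)) = ENNReal.ofReal (q^(k+1) / 2) := by
      have hpd : Pairwise (Function.onFun Disjoint fun j : ℕ => mhFk q (k+1+j)) := by
        intro i j hij
        exact mhFk_disj hq0 hq1 (fun h => hij (by omega))
      rw [measure_iUnion hpd (fun j => mhFk_meas)]
      have heq : ∀ j : ℕ, volume (mhFk q (k+1+j))
            = ENNReal.ofReal ((q^(k+1) * ((1-q)/2)) * q^j) := by
        intro j
        rw [mhFk_vol hq0]
        congr 1
        rw [pow_add]
        ring
      simp_rw [heq]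
      rw [← ENNReal.ofReal_tsum_of_nonneg
          (fun j => by
            have h1q : (0:ℝ) ≤ 1-q := by linarith
            positivity)
          ((summable_geometric_of_lt_one hq0.le hq1).mul_left _)]
      rw [tsum_mul_left, tsum_geometric_of_lt_one hq0.le hq1]
      congr 1
      have hq1' : (1:ℝ) - q ≠ 0 := by linarith
      field_simp
    calc ENNReal.ofReal (t / 2)
        ≤ volume H := by
          rw [hH, measure_union hdisj measurableSet_Ioo, hvolU, Real.volume_Ioo,
            ← ENNReal.ofReal_add (by positivity) (by
              have : q^(k+1) ≤ min t a := le_min hk1.le haq.le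
              linarith)]
          apply ENNReal.ofReal_le_ofReal
          rcases le_total t a with h | h
          · rw [min_eq_left h]; linarith
          · rw [min_eq_right h]
            have : a - q^(k+1)/2 = q^k/2 := by rw [ha, pow_succ]; ring
            linarith
      _ ≤ volume {s ∈ Ioo 0 t | mhf q β s ≤ 0} := measure_mono hHsub
  have hS0 : ∀ b ∈ {a : ℝ | ENNReal.ofReal (t / 2)
      ≤ volume {s ∈ Ioo 0 t | mhf q β s ≤ a}}, (0:ℝ) ≤ b := by
    intro b hb
    by_contra hb0
    push_neg at hb0
    have hempty : {s ∈ Ioo 0 t | mhf q β s ≤ b} = ∅ := by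
      ext s
      simp only [Set.mem_setOf_eq, Set.mem_empty_iff_false, iff_false, not_and]
      intro _
      have := mhf_nonneg (β := β) hq0 s
      intro hle
      linarith
    rw [Set.mem_setOf_eq, hempty, measure_empty] at hb
    have : (0:ENNReal) < ENNReal.ofReal (t/2) := ENNReal.ofReal_pos.2 (by linarith)
    exact absurd (lt_of_lt_of_le this hb) (lt_irrefl _)
  rw [lowerMedian]
  exact le_antisymm (csInf_le ⟨0, hS0⟩ h0S) (le_csInf ⟨0, h0S⟩ hS0)

lemma mh_pow_rpow (hq0 : 0 < q) (m : ℕ) (c : ℝ) : (q^m : ℝ) ^ c = (q ^ c) ^ m := by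
  rw [← Real.rpow_natCast q m, ← Real.rpow_mul hq0.le, mul_comm, Real.rpow_mul hq0.le,
    Real.rpow_natCast]

lemma mh_qc (hq0 : 0 < q) (c : ℝ) : q^(-c) * q = q^(1-c) := by
  rw [show (1:ℝ)-c = -c+1 by ring, Real.rpow_add hq0, Real.rpow_one]

lemma mh_term (hq0 : 0 < q) (n : ℕ) (c w : ℝ) :
    (q^n : ℝ)^(-c) * (q^n * w) = w * (q^(1-c))^n := by
  rw [mh_pow_rpow hq0 n (-c), ← mh_qc hq0 c, mul_pow]
  ring

lemma mh_Q_lt_one (hq0 : 0 < q) (hq1 : q < 1) {c : ℝ} (hc1 : c < 1) : q^(1-c) < 1 :=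
  Real.rpow_lt_one hq0.le hq1 (by linarith)

lemma mh_Q_pos (hq0 : 0 < q) (c : ℝ) : 0 < q^(1-c) := Real.rpow_pos_of_pos hq0 _

lemma mh_lintegral_upper (hq0 : 0 < q) (hq1 : q < 1) {c : ℝ} (hc0 : 0 < c) (hc1 : c < 1) :
    ∫⁻ s in Ioi (0:ℝ), (mhE q).indicator (fun s => ENNReal.ofReal (s ^ (-c))) s
      ≤ ENNReal.ofReal ((((1-q)/2) * q^(-c)) * (1 - q^(1-c))⁻¹) := by
  rw [lintegral_indicator mhE_meas, Measure.restrict_restrict mhE_meas,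
    Set.inter_eq_left.2 (mhE_subset_Ioi hq0)]
  rw [mhE, lintegral_iUnion (fun k => mhEk_meas k) (mhEk_disj hq0 hq1)]
  have hbound : ∀ k : ℕ, ∫⁻ s in mhEk q k, ENNReal.ofReal (s ^ (-c))
      ≤ ENNReal.ofReal ((((1-q)/2) * q^(-c)) * (q^(1-c))^k) := by
    intro k
    have hstep : ∫⁻ s in mhEk q k, ENNReal.ofReal (s ^ (-c))
        ≤ ∫⁻ _ in mhEk q k, ENNReal.ofReal ((q^(k+1)) ^ (-c)) := by
      apply lintegral_mono_ae
      rw [ae_restrict_iff' (mhEk_meas k)]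
      apply Eventually.of_forall
      intro s hs
      apply ENNReal.ofReal_le_ofReal
      exact Real.rpow_le_rpow_of_nonpos (pow_pos hq0 (k+1))
        (mhEk_subset hq0 hq1 k hs).1.le (neg_nonpos.2 (by linarith))
    refine hstep.trans (le_of_eq ?_)
    rw [setLIntegral_const, mhEk_vol hq0,
      ← ENNReal.ofReal_mul (Real.rpow_nonneg (pow_pos hq0 (k+1)).le _)]
    congr 1
    rw [mh_pow_rpow hq0 (k+1) (-c), ← mh_qc hq0 c, mul_pow, pow_succ]
    ring
  calc ∑' k, ∫⁻ s in mhEk q k, ENNReal.ofReal (s ^ (-c))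
      ≤ ∑' k, ENNReal.ofReal ((((1-q)/2) * q^(-c)) * (q^(1-c))^k) :=
        ENNReal.tsum_le_tsum hbound
    _ = ENNReal.ofReal ((((1-q)/2) * q^(-c)) * (1 - q^(1-c))⁻¹) := by
        rw [← ENNReal.ofReal_tsum_of_nonneg
          (fun k => by
            have h1q : (0:ℝ) ≤ 1 - q := by linarith
            have := (mh_Q_pos hq0 c).le
            have := Real.rpow_nonneg hq0.le (-c)
            positivity)
          (((summable_geometric_of_lt_one (mh_Q_pos hq0 c).le
            (mh_Q_lt_one hq0 hq1 hc1))).mul_left _)]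
        rw [tsum_mul_left, tsum_geometric_of_lt_one (mh_Q_pos hq0 c).le
          (mh_Q_lt_one hq0 hq1 hc1)]

lemma mhf_ofReal_eq (hq0 : 0 < q) (hβ0 : 0 < β) :
    (fun s => ENNReal.ofReal (mhf q β s))
      = (mhE q).indicator (fun s => ENNReal.ofReal (s ^ (-β))) := by
  funext s
  by_cases hs : s ∈ mhE q
  · rw [mhf, Set.indicator_of_mem hs, Set.indicator_of_mem hs]
  · rw [mhf, Set.indicator_of_notMem hs, Set.indicator_of_notMem hs, ENNReal.ofReal_zero]

lemma mhf_rpow_ofReal_eq (hq0 : 0 < q) (hβ0 : 0 < β) {p : ℝ} (hp : 0 < p) :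
    (fun s => ENNReal.ofReal (mhf q β s ^ p))
      = (mhE q).indicator (fun s => ENNReal.ofReal (s ^ (-(β*p)))) := by
  funext s
  by_cases hs : s ∈ mhE q
  · rw [mhf, Set.indicator_of_mem hs, Set.indicator_of_mem hs]
    congr 1
    rw [show -(β*p) = (-β)*p by ring, Real.rpow_mul (mhE_pos hq0 s hs).le]
  · rw [mhf, Set.indicator_of_notMem hs, Set.indicator_of_notMem hs,
      Real.zero_rpow hp.ne', ENNReal.ofReal_zero]

lemma mh_J_upper (hq0 : 0 < q) (hq1 : q < 1) (hβ0 : 0 < β) (hβ1 : β < 1) {t : ℝ} :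
    ∫⁻ s in Ioo (0:ℝ) t, ENNReal.ofReal (mhf q β s)
      ≤ ENNReal.ofReal ((((1-q)/2) * q^(-β)) * (1 - q^(1-β))⁻¹) := by
  refine le_trans (lintegral_mono' (Measure.restrict_mono Set.Ioo_subset_Ioi_self le_rfl)
    le_rfl) ?_
  rw [mhf_ofReal_eq hq0 hβ0]
  exact mh_lintegral_upper hq0 hq1 hβ0 hβ1

lemma mh_J_lower (hq0 : 0 < q) (hq1 : q < 1) (hβ0 : 0 < β) (hβ1 : β < 1)
    {t : ℝ} (m : ℕ) (hmt : q^m < t) :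
    ENNReal.ofReal ((((1-q)/2) * (1 - q^(1-β))⁻¹) * (q^(1-β))^m)
      ≤ ∫⁻ s in Ioo (0:ℝ) t, ENNReal.ofReal (mhf q β s) := by
  have hsub : (⋃ i : ℕ, mhEk q (m+i)) ⊆ Ioo 0 t := by
    intro s hs
    rw [Set.mem_iUnion] at hs
    obtain ⟨i, hi⟩ := hs
    have h1 := mhEk_subset hq0 hq1 (m+i) hi
    have h2 : q^(m+i) ≤ q^m := pow_le_pow_of_le_one hq0.le hq1.le (by omega)
    exact ⟨(pow_pos hq0 _).trans h1.1, lt_of_le_of_lt (h1.2.trans h2) hmt⟩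
  refine le_trans ?_ (lintegral_mono' (Measure.restrict_mono hsub le_rfl) le_rfl)
  rw [lintegral_iUnion (s := fun i => mhEk q (m+i)) (fun i => mhEk_meas _)
    (fun i j hij => mhEk_disj hq0 hq1 (fun h => hij (by omega)))]
  have hbound : ∀ i : ℕ, ENNReal.ofReal (((1-q)/2) * (q^(1-β))^(m+i))
      ≤ ∫⁻ s in mhEk q (m+i), ENNReal.ofReal (mhf q β s) := by
    intro i
    have hstep : ∫⁻ _ in mhEk q (m+i), ENNReal.ofReal ((q^(m+i) : ℝ) ^ (-β))
        ≤ ∫⁻ s in mhEk q (m+i), ENNReal.ofReal (mhf q β s) := by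
      apply lintegral_mono_ae
      rw [ae_restrict_iff' (mhEk_meas _)]
      apply Eventually.of_forall
      intro s hs
      apply ENNReal.ofReal_le_ofReal
      have hsE : s ∈ mhE q := Set.mem_iUnion.2 ⟨m+i, hs⟩
      rw [mhf, Set.indicator_of_mem hsE]
      exact Real.rpow_le_rpow_of_nonpos (mhE_pos hq0 s hsE) hs.2
        (neg_nonpos.2 hβ0.le)
    refine le_trans (le_of_eq ?_) hstep
    rw [setLIntegral_const, mhEk_vol hq0,
      ← ENNReal.ofReal_mul (Real.rpow_nonneg (pow_pos hq0 _).le _)]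
    congr 1
    rw [mh_term hq0 (m+i) β ((1-q)/2)]
  calc ENNReal.ofReal ((((1-q)/2) * (1 - q^(1-β))⁻¹) * (q^(1-β))^m)
      = ∑' i : ℕ, ENNReal.ofReal (((1-q)/2) * (q^(1-β))^(m+i)) := by
        have heq : ∀ i : ℕ, ((1-q)/2) * (q^(1-β))^(m+i)
            = (((1-q)/2) * (q^(1-β))^m) * (q^(1-β))^i := by
          intro i
          rw [pow_add]
          ring
        simp_rw [heq]
        rw [← ENNReal.ofReal_tsum_of_nonneg
          (fun i => by
            have h1q : (0:ℝ) ≤ 1 - q := by linarith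
            have := (mh_Q_pos hq0 β).le
            positivity)
          ((summable_geometric_of_lt_one (mh_Q_pos hq0 β).le
            (mh_Q_lt_one hq0 hq1 hβ1)).mul_left _)]
        rw [tsum_mul_left, tsum_geometric_of_lt_one (mh_Q_pos hq0 β).le
          (mh_Q_lt_one hq0 hq1 hβ1)]
        congr 1
        ring
    _ ≤ ∑' i : ℕ, ∫⁻ s in mhEk q (m+i), ENNReal.ofReal (mhf q β s) :=
        ENNReal.tsum_le_tsum hbound

lemma mh_integral_lower (hq0 : 0 < q) (hq1 : q < 1) (hβ0 : 0 < β) (hβ1 : β < 1)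
    {t : ℝ} (m : ℕ) (hmt : q^m < t) :
    (((1-q)/2) * (1 - q^(1-β))⁻¹) * (q^(1-β))^m ≤ ∫ s in Ioo (0:ℝ) t, mhf q β s := by
  rw [integral_eq_lintegral_of_nonneg_ae
    (Eventually.of_forall (mhf_nonneg hq0)) mhf_meas.aestronglyMeasurable]
  have hle := mh_J_lower hq0 hq1 hβ0 hβ1 m hmt
  have hfin : ∫⁻ s in Ioo (0:ℝ) t, ENNReal.ofReal (mhf q β s) ≠ ⊤ :=
    (lt_of_le_of_lt (mh_J_upper hq0 hq1 hβ0 hβ1) ENNReal.ofReal_lt_top).ne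
  have h1q : (0:ℝ) ≤ 1 - q := by linarith
  have hQ1 : (0:ℝ) ≤ (1 - q^(1-β))⁻¹ := by
    have := mh_Q_lt_one hq0 hq1 hβ1
    have : (0:ℝ) ≤ 1 - q^(1-β) := by linarith
    positivity
  have hnn : (0:ℝ) ≤ (((1-q)/2) * (1 - q^(1-β))⁻¹) * (q^(1-β))^m := by
    have := (mh_Q_pos hq0 β).le
    positivity
  calc (((1-q)/2) * (1 - q^(1-β))⁻¹) * (q^(1-β))^m
      = (ENNReal.ofReal ((((1-q)/2) * (1 - q^(1-β))⁻¹) * (q^(1-β))^m)).toReal := by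
        rw [ENNReal.toReal_ofReal hnn]
    _ ≤ (∫⁻ s in Ioo (0:ℝ) t, ENNReal.ofReal (mhf q β s)).toReal :=
        ENNReal.toReal_mono hfin hle

lemma mh_geom {x : ℝ} (hx0 : 0 ≤ x) (hx1 : x < 1) (C0 : ℝ) (hC0 : 0 ≤ C0) :
    ∑' j : ℕ, ENNReal.ofReal (C0 * x^j) = ENNReal.ofReal (C0 * (1-x)⁻¹) := by
  rw [← ENNReal.ofReal_tsum_of_nonneg (fun j => by positivity)
    ((summable_geometric_of_lt_one hx0 hx1).mul_left _), tsum_mul_left,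
    tsum_geometric_of_lt_one hx0 hx1]

lemma mh_sum_term (hq0 : 0 < q) {p u : ℝ} (hu0 : 0 ≤ u) (j : ℕ) :
    (u * (q^(1-β))^(j+1) / q^j)^p * (q^j*(1-q))
      = (u^p * q^(p*(1-β)) * (1-q)) * (q^(1-β*p))^j := by
  have e1 : ((q^(1-β) : ℝ))^(j+1) = q^((1-β)*((j:ℝ)+1)) := by
    rw [← Real.rpow_natCast (q^(1-β)) (j+1), ← Real.rpow_mul hq0.le]
    push_cast
    ring_nf
  have e2 : (q : ℝ)^(j : ℕ) = q^((j:ℝ)) := (Real.rpow_natCast q j).symm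
  have e3 : ((q^(1-β*p) : ℝ))^(j : ℕ) = q^((1-β*p)*(j:ℝ)) := by
    rw [← Real.rpow_natCast (q^(1-β*p)) j, ← Real.rpow_mul hq0.le]
  rw [e1, e3, e2, mul_div_assoc, ← Real.rpow_sub hq0,
    Real.mul_rpow hu0 (Real.rpow_nonneg hq0.le _), ← Real.rpow_mul hq0.le]
  have e4 : q^(((1-β)*((j:ℝ)+1) - (j:ℝ))*p) * q^((j:ℝ))
      = q^(p*(1-β)) * q^((1-β*p)*(j:ℝ)) := by
    rw [← Real.rpow_add hq0, ← Real.rpow_add hq0]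
    congr 1
    ring
  calc u^p * q^(((1-β)*((j:ℝ)+1) - (j:ℝ))*p) * (q^((j:ℝ))*(1-q))
      = (q^(((1-β)*((j:ℝ)+1) - (j:ℝ))*p) * q^((j:ℝ))) * (u^p * (1-q)) := by ring
    _ = (q^(p*(1-β)) * q^((1-β*p)*(j:ℝ))) * (u^p * (1-q)) := by rw [e4]
    _ = u^p * q^(p*(1-β)) * (1-q) * q^((1-β*p)*(j:ℝ)) := by ring

lemma mh_val_eq {p : ℝ} (hp : 1 < p) :
    2 * ((1-1/p)⁻¹/2)^p = 2^(1-p) * (p/(p-1))^p := by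
  have hp0 : (0:ℝ) < p := by linarith
  have hp1 : (0:ℝ) < p - 1 := by linarith
  have h1 : (1 - 1/p)⁻¹ = p/(p-1) := by
    field_simp
  rw [h1, Real.div_rpow (by positivity) (by norm_num : (0:ℝ) ≤ 2),
    Real.rpow_sub (by norm_num : (0:ℝ) < 2), Real.rpow_one]
  field_simp

lemma mh_choose_beta {p : ℝ} (hp : 1 < p) {ε2 : ℝ} (hε2 : 0 < ε2) :
    ∃ β : ℝ, 0 < β ∧ β * p < 1 ∧
      2^(1-p) * (p/(p-1))^p - ε2 < 2 * ((1-β)⁻¹/2)^p := by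
  have hp0 : (0:ℝ) < p := by linarith
  have hbase : (0:ℝ) < (1-1/p)⁻¹/2 := by
    have h1 : (0:ℝ) < 1 - 1/p := by
      rw [sub_pos, div_lt_one hp0]
      exact hp
    positivity
  have hne : (1:ℝ) - 1/p ≠ 0 := by
    have h1 : (0:ℝ) < 1 - 1/p := by
      rw [sub_pos, div_lt_one hp0]
      exact hp
    exact h1.ne'
  have hinner : ContinuousAt (fun β : ℝ => (1-β)⁻¹/2) (1/p) :=
    (((continuous_const.sub continuous_id).continuousAt).inv₀ hne).div_const 2
  have hcont : ContinuousAt (fun β : ℝ => 2 * ((1-β)⁻¹/2)^p) (1/p) :=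
    continuousAt_const.mul (hinner.rpow_const (Or.inl hbase.ne'))
  have htend : Tendsto (fun β : ℝ => 2 * ((1-β)⁻¹/2)^p) (nhdsWithin (1/p) (Iio (1/p)))
      (nhds (2 * ((1-1/p)⁻¹/2)^p)) :=
    hcont.continuousWithinAt.tendsto
  have hev1 : ∀ᶠ β in nhdsWithin (1/p) (Iio (1/p)),
      2^(1-p) * (p/(p-1))^p - ε2 < 2 * ((1-β)⁻¹/2)^p := by
    apply htend.eventually
    apply eventually_gt_nhds
    rw [mh_val_eq hp]
    linarith
  have hev2 : ∀ᶠ β in nhdsWithin (1/p) (Iio (1/p)), (0:ℝ) < β :=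
    eventually_nhdsWithin_of_eventually_nhds (eventually_gt_nhds (by positivity))
  have hev3 : ∀ᶠ β in nhdsWithin (1/p) (Iio (1/p)), β ∈ Iio (1/p) :=
    eventually_mem_nhdsWithin
  have := nhdsLT_neBot (1/p)
  obtain ⟨β, h1, h2, h3⟩ := (hev1.and (hev2.and hev3)).exists
  refine ⟨β, h2, ?_, h1⟩
  rw [Set.mem_Iio] at h3
  calc β * p < (1/p) * p := by
        apply mul_lt_mul_of_pos_right h3 hp0
    _ = 1 := by field_simp


lemma mh_choose_q {p : ℝ} (hp : 1 < p) (hβ0 : 0 < β) (hβ1 : β < 1) {T : ℝ}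
    (hT : T < 2 * ((1-β)⁻¹/2)^p) :
    ∃ q : ℝ, 0 < q ∧ q < 1 ∧
      T < 2 * (((1-q)/2) * (1-q^(1-β))⁻¹)^p * q^p := by
  have hb : (0:ℝ) < 1 - β := by linarith
  have hbne : ((1:ℝ)-β)⁻¹/2 ≠ 0 := by positivity
  have hd : HasDerivAt (fun y : ℝ => y^(1-β)) ((1-β) * (1:ℝ)^(1-β-1)) 1 :=
    Real.hasDerivAt_rpow_const (Or.inl one_ne_zero)
  rw [Real.one_rpow, mul_one] at hd
  have hslope : Tendsto (slope (fun y : ℝ => y^(1-β)) 1)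
      (nhdsWithin 1 (Iio 1)) (nhds (1-β)) :=
    (hasDerivAt_iff_tendsto_slope.1 hd).mono_left
      (nhdsWithin_mono 1 (fun x hx => ne_of_lt hx))
  have hu : Tendsto (fun q : ℝ => (1-q) * (1-q^(1-β))⁻¹)
      (nhdsWithin 1 (Iio 1)) (nhds ((1-β)⁻¹)) := by
    apply (hslope.inv₀ hb.ne').congr
    intro q
    rw [slope_def_field, Real.one_rpow]
    rw [← inv_div, inv_inv, ← neg_sub (1:ℝ) q, ← neg_sub (1:ℝ) (q^(1-β)),
      neg_div_neg_eq, div_eq_mul_inv]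
  have hu2 : Tendsto (fun q : ℝ => ((1-q)/2) * (1-q^(1-β))⁻¹)
      (nhdsWithin 1 (Iio 1)) (nhds ((1-β)⁻¹/2)) := by
    have := hu.div_const 2
    apply this.congr
    intro q
    ring
  have hu3 : Tendsto (fun q : ℝ => (((1-q)/2) * (1-q^(1-β))⁻¹)^p)
      (nhdsWithin 1 (Iio 1)) (nhds (((1-β)⁻¹/2)^p)) :=
    ((Real.continuousAt_rpow_const _ p (Or.inl hbne)).tendsto).comp hu2
  have hu4 : Tendsto (fun q : ℝ => q^p) (nhdsWithin 1 (Iio 1)) (nhds 1) := by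
    have h := (Real.continuousAt_rpow_const 1 p (Or.inl one_ne_zero)).tendsto
    rw [Real.one_rpow] at h
    exact h.mono_left nhdsWithin_le_nhds
  have hΦ : Tendsto (fun q : ℝ => 2 * (((1-q)/2) * (1-q^(1-β))⁻¹)^p * q^p)
      (nhdsWithin 1 (Iio 1)) (nhds (2 * ((1-β)⁻¹/2)^p)) := by
    have := ((hu3.const_mul 2).mul hu4)
    rw [mul_one] at this
    exact this
  have hev1 : ∀ᶠ q in nhdsWithin (1:ℝ) (Iio 1),
      T < 2 * (((1-q)/2) * (1-q^(1-β))⁻¹)^p * q^p :=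
    hΦ.eventually (eventually_gt_nhds hT)
  have hev2 : ∀ᶠ q in nhdsWithin (1:ℝ) (Iio 1), (0:ℝ) < q :=
    eventually_nhdsWithin_of_eventually_nhds (eventually_gt_nhds one_pos)
  have hev3 : ∀ᶠ q in nhdsWithin (1:ℝ) (Iio 1), q ∈ Iio 1 :=
    eventually_mem_nhdsWithin
  have := nhdsLT_neBot (1:ℝ)
  obtain ⟨q, h1, h2, h3⟩ := (hev1.and (hev2.and hev3)).exists
  exact ⟨q, h2, h3, h1⟩

theorem median_hardy_stmt11 (p : ℝ) (hp : 1 < p) (ε : ℝ) (hε : 0 < ε) :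
    ∃ f : ℝ → ℝ, Measurable f ∧ (∀ x, 0 ≤ f x) ∧
      MemLp f (ENNReal.ofReal p) (volume.restrict (Ioi 0)) ∧
      0 < ∫⁻ t in Ioi (0:ℝ), ENNReal.ofReal (f t ^ p) ∧
      ENNReal.ofReal (2 ^ (1 - p) * (p / (p - 1)) ^ p - ε) *
          ∫⁻ t in Ioi (0:ℝ), ENNReal.ofReal (f t ^ p)
        < ∫⁻ t in Ioi (0:ℝ),
            ENNReal.ofReal (|lowerMedian f t - (1/t) * ∫ s in Ioo (0:ℝ) t, f s| ^ p) := by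
  have hp0 : (0:ℝ) < p := by linarith
  obtain ⟨β, hβ0, hβp, hβgt⟩ := mh_choose_beta hp (half_pos hε)
  have hβ1 : β < 1 := by nlinarith
  have hT : 2^(1-p) * (p/(p-1))^p - ε < 2 * ((1-β)⁻¹/2)^p := by linarith
  obtain ⟨q, hq0, hq1, hqgt⟩ := mh_choose_q hp hβ0 hβ1 hT
  have hβp0 : 0 < β * p := by positivity
  have h1q : (0:ℝ) < 1 - q := by linarith
  have h1Q1 : (0:ℝ) < 1 - q^(1-β) := by
    have := mh_Q_lt_one hq0 hq1 hβ1
    linarith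
  have h1x : (0:ℝ) < 1 - q^(1-β*p) := by
    have := mh_Q_lt_one hq0 hq1 hβp
    linarith
  have hu0 : (0:ℝ) < ((1-q)/2) * (1-q^(1-β))⁻¹ := by positivity
  have hn0 : (0:ℝ) < (((1-q)/2) * q^(-(β*p))) * (1 - q^(1-β*p))⁻¹ := by
    have := Real.rpow_pos_of_pos hq0 (-(β*p))
    positivity
  have hSig0 : (0:ℝ) < ((((1-q)/2) * (1-q^(1-β))⁻¹)^p * q^(p*(1-β)) * (1-q))
      * (1 - q^(1-β*p))⁻¹ := by
    have h1 := Real.rpow_pos_of_pos hu0 p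
    have h2 := Real.rpow_pos_of_pos hq0 (p*(1-β))
    positivity
  -- N bounds
  have hNcongr : ∫⁻ t in Ioi (0:ℝ), ENNReal.ofReal (mhf q β t ^ p)
      = ∫⁻ t in Ioi (0:ℝ), (mhE q).indicator (fun s => ENNReal.ofReal (s ^ (-(β*p)))) t :=
    lintegral_congr (fun t => congrFun (mhf_rpow_ofReal_eq hq0 hβ0 hp0) t)
  have hNup : ∫⁻ t in Ioi (0:ℝ), ENNReal.ofReal (mhf q β t ^ p)
      ≤ ENNReal.ofReal ((((1-q)/2) * q^(-(β*p))) * (1 - q^(1-β*p))⁻¹) := by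
    rw [hNcongr]
    exact mh_lintegral_upper hq0 hq1 hβp0 hβp
  have hNlow : 0 < ∫⁻ t in Ioi (0:ℝ), ENNReal.ofReal (mhf q β t ^ p) := by
    have hsub : mhEk q 0 ⊆ Ioi (0:ℝ) := by
      intro s hs
      exact (by positivity : (0:ℝ) < q^0 * ((1+q)/2)).trans hs.1
    have hone : ∫⁻ _ in mhEk q 0, (1:ENNReal) ≤ ∫⁻ t in mhEk q 0, ENNReal.ofReal (mhf q β t ^ p) := by
      apply lintegral_mono_ae
      rw [ae_restrict_iff' (mhEk_meas 0)]
      apply Eventually.of_forall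
      intro s hs
      have hsE : s ∈ mhE q := Set.mem_iUnion.2 ⟨0, hs⟩
      have hs0 : 0 < s := mhE_pos hq0 s hsE
      have hs1 : s ≤ 1 := by
        have := hs.2
        rwa [pow_zero] at this
      have h1 : (1:ℝ) ≤ s ^ (-β) := by
        have := Real.rpow_le_rpow_of_nonpos hs0 hs1 (neg_nonpos.2 hβ0.le)
        rwa [Real.one_rpow] at this
      have h2 : (1:ℝ) ≤ mhf q β s ^ p := by
        rw [mhf, Set.indicator_of_mem hsE]
        calc (1:ℝ) = 1 ^ p := (Real.one_rpow p).symm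
          _ ≤ (s ^ (-β)) ^ p := Real.rpow_le_rpow (by norm_num) h1 hp0.le
      calc (1:ENNReal) = ENNReal.ofReal 1 := ENNReal.ofReal_one.symm
        _ ≤ ENNReal.ofReal (mhf q β s ^ p) := ENNReal.ofReal_le_ofReal h2
    have hvol : ∫⁻ _ in mhEk q 0, (1:ENNReal) = ENNReal.ofReal (q^0 * ((1-q)/2)) := by
      rw [setLIntegral_const, one_mul, mhEk_vol hq0]
    calc (0:ENNReal) < ENNReal.ofReal (q^0 * ((1-q)/2)) := by
          rw [pow_zero, one_mul]
          exact ENNReal.ofReal_pos.2 (by linarith)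
      _ = ∫⁻ _ in mhEk q 0, (1:ENNReal) := hvol.symm
      _ ≤ ∫⁻ t in mhEk q 0, ENNReal.ofReal (mhf q β t ^ p) := hone
      _ ≤ ∫⁻ t in Ioi (0:ℝ), ENNReal.ofReal (mhf q β t ^ p) :=
          lintegral_mono' (Measure.restrict_mono hsub le_rfl) le_rfl
  -- RHS lower bound
  have hRHSlow : ENNReal.ofReal (((((1-q)/2) * (1-q^(1-β))⁻¹)^p * q^(p*(1-β)) * (1-q))
        * (1 - q^(1-β*p))⁻¹)
      ≤ ∫⁻ t in Ioi (0:ℝ),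
          ENNReal.ofReal (|lowerMedian (mhf q β) t
            - (1/t) * ∫ s in Ioo (0:ℝ) t, mhf q β s| ^ p) := by
    have hUsub : (⋃ j : ℕ, Ioc (q^(j+1)) (q^j)) ⊆ Ioi (0:ℝ) := by
      intro s hs
      rw [Set.mem_iUnion] at hs
      obtain ⟨j, hj⟩ := hs
      exact (pow_pos hq0 _).trans hj.1
    have hstep3 : ∀ j : ℕ,
        ENNReal.ofReal (((((1-q)/2) * (1-q^(1-β))⁻¹) * (q^(1-β))^(j+1) / q^j)^p)
            * volume (Ioc (q^(j+1)) (q^j))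
          ≤ ∫⁻ t in Ioc (q^(j+1)) (q^j),
              ENNReal.ofReal (|lowerMedian (mhf q β) t
                - (1/t) * ∫ s in Ioo (0:ℝ) t, mhf q β s| ^ p) := by
      intro j
      rw [← setLIntegral_const]
      apply lintegral_mono_ae
      rw [ae_restrict_iff' measurableSet_Ioc]
      apply Eventually.of_forall
      intro t ht
      have ht0 : 0 < t := (pow_pos hq0 _).trans ht.1
      have ht1 : t ≤ 1 := ht.2.trans (pow_le_one₀ hq0.le hq1.le)
      rw [mh_median_zero hq0 hq1 ht0 ht1, zero_sub, abs_neg]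
      have hI := mh_integral_lower hq0 hq1 hβ0 hβ1 (j+1) ht.1
      have hInn : (0:ℝ) ≤ ∫ s in Ioo (0:ℝ) t, mhf q β s := by
        have hpos : (0:ℝ) ≤ (((1-q)/2) * (1-q^(1-β))⁻¹) * (q^(1-β))^(j+1) := by
          have := (mh_Q_pos hq0 β).le
          positivity
        linarith
      rw [abs_of_nonneg (by positivity)]
      apply ENNReal.ofReal_le_ofReal
      apply Real.rpow_le_rpow (by positivity) _ hp0.le
      calc (((1-q)/2) * (1-q^(1-β))⁻¹) * (q^(1-β))^(j+1) / q^j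
          ≤ (∫ s in Ioo (0:ℝ) t, mhf q β s) / q^j := by
            apply div_le_div_of_nonneg_right hI (pow_pos hq0 j).le
        _ ≤ (∫ s in Ioo (0:ℝ) t, mhf q β s) / t := by
            apply div_le_div_of_nonneg_left hInn ht0 ht.2
        _ = (1/t) * ∫ s in Ioo (0:ℝ) t, mhf q β s := by ring
    calc ENNReal.ofReal (((((1-q)/2) * (1-q^(1-β))⁻¹)^p * q^(p*(1-β)) * (1-q))
            * (1 - q^(1-β*p))⁻¹)
        = ∑' j : ℕ, ENNReal.ofReal (((((1-q)/2) * (1-q^(1-β))⁻¹)^p * q^(p*(1-β)) * (1-q))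
            * (q^(1-β*p))^j) := by
          rw [mh_geom (mh_Q_pos hq0 (β*p)).le (mh_Q_lt_one hq0 hq1 hβp)]
          have h1 := Real.rpow_pos_of_pos hu0 p
          have h2 := Real.rpow_pos_of_pos hq0 (p*(1-β))
          positivity
      _ = ∑' j : ℕ, ENNReal.ofReal (((((1-q)/2) * (1-q^(1-β))⁻¹) * (q^(1-β))^(j+1) / q^j)^p)
            * volume (Ioc (q^(j+1)) (q^j)) := by
          congr 1
          funext j
          rw [Real.volume_Ioc,
            ← ENNReal.ofReal_mul (by positivity)]
          congr 1
          rw [show (q:ℝ)^j - q^(j+1) = q^j * (1-q) by ring]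
          exact (mh_sum_term hq0 hu0.le j).symm
      _ ≤ ∑' j : ℕ, ∫⁻ t in Ioc (q^(j+1)) (q^j),
            ENNReal.ofReal (|lowerMedian (mhf q β) t
              - (1/t) * ∫ s in Ioo (0:ℝ) t, mhf q β s| ^ p) :=
          ENNReal.tsum_le_tsum hstep3
      _ = ∫⁻ t in ⋃ j : ℕ, Ioc (q^(j+1)) (q^j),
            ENNReal.ofReal (|lowerMedian (mhf q β) t
              - (1/t) * ∫ s in Ioo (0:ℝ) t, mhf q β s| ^ p) :=
          (lintegral_iUnion (fun j => measurableSet_Ioc) (mh_annuli_disj hq0 hq1) _).symm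
      _ ≤ ∫⁻ t in Ioi (0:ℝ),
            ENNReal.ofReal (|lowerMedian (mhf q β) t
              - (1/t) * ∫ s in Ioo (0:ℝ) t, mhf q β s| ^ p) :=
          lintegral_mono' (Measure.restrict_mono hUsub le_rfl) le_rfl
  -- key algebraic identity
  have hkey : ((((1-q)/2) * (1-q^(1-β))⁻¹)^p * q^(p*(1-β)) * (1-q))
        * (1 - q^(1-β*p))⁻¹
      = (2 * (((1-q)/2) * (1-q^(1-β))⁻¹)^p * q^p)
        * ((((1-q)/2) * q^(-(β*p))) * (1 - q^(1-β*p))⁻¹) := by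
    have hqq : q^p * q^(-(β*p)) = q^(p*(1-β)) := by
      rw [← Real.rpow_add hq0]
      congr 1
      ring
    calc ((((1-q)/2) * (1-q^(1-β))⁻¹)^p * q^(p*(1-β)) * (1-q)) * (1 - q^(1-β*p))⁻¹
        = ((((1-q)/2) * (1-q^(1-β))⁻¹)^p * (q^p * q^(-(β*p))) * (1-q)) * (1 - q^(1-β*p))⁻¹ := by
          rw [hqq]
      _ = (2 * (((1-q)/2) * (1-q^(1-β))⁻¹)^p * q^p)
          * ((((1-q)/2) * q^(-(β*p))) * (1 - q^(1-β*p))⁻¹) := by ring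
  -- Memℒp
  have hmem : MemLp (mhf q β) (ENNReal.ofReal p) (volume.restrict (Ioi 0)) := by
    refine ⟨mhf_meas.aestronglyMeasurable, ?_⟩
    rw [eLpNorm_eq_lintegral_rpow_enorm_toReal
      (by simp [ENNReal.ofReal_eq_zero]; linarith) ENNReal.ofReal_ne_top]
    rw [ENNReal.toReal_ofReal hp0.le]
    apply ENNReal.rpow_lt_top_of_nonneg (by positivity)
    have heq : ∫⁻ x in Ioi (0:ℝ), ‖mhf q β x‖ₑ ^ p
        = ∫⁻ x in Ioi (0:ℝ), ENNReal.ofReal (mhf q β x ^ p) := by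
      apply lintegral_congr
      intro x
      rw [← ENNReal.ofReal_rpow_of_nonneg (mhf_nonneg hq0 x) hp0.le]
      congr 1
      exact Real.enorm_eq_ofReal (mhf_nonneg hq0 x)
    rw [heq]
    exact (lt_of_le_of_lt hNup ENNReal.ofReal_lt_top).ne
  refine ⟨mhf q β, mhf_meas, mhf_nonneg hq0, hmem, hNlow, ?_⟩
  rcases le_or_gt (2^(1-p) * (p/(p-1))^p - ε) 0 with hc | hc
  · rw [ENNReal.ofReal_eq_zero.2 hc, zero_mul]
    exact lt_of_lt_of_le (ENNReal.ofReal_pos.2 hSig0) hRHSlow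
  · calc ENNReal.ofReal (2^(1-p) * (p/(p-1))^p - ε)
          * ∫⁻ t in Ioi (0:ℝ), ENNReal.ofReal (mhf q β t ^ p)
        ≤ ENNReal.ofReal (2^(1-p) * (p/(p-1))^p - ε)
          * ENNReal.ofReal ((((1-q)/2) * q^(-(β*p))) * (1 - q^(1-β*p))⁻¹) :=
          mul_le_mul_right hNup _
      _ = ENNReal.ofReal ((2^(1-p) * (p/(p-1))^p - ε)
          * ((((1-q)/2) * q^(-(β*p))) * (1 - q^(1-β*p))⁻¹)) :=
          (ENNReal.ofReal_mul hc.le).symm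
      _ < ENNReal.ofReal (((((1-q)/2) * (1-q^(1-β))⁻¹)^p * q^(p*(1-β)) * (1-q))
          * (1 - q^(1-β*p))⁻¹) := by
          rw [ENNReal.ofReal_lt_ofReal_iff hSig0, hkey]
          exact mul_lt_mul_of_pos_right hqgt hn0
      _ ≤ _ := hRHSlow
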